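/- The family F̂⁺ is admissible, where for 0 ≤ n ≤ 2, F̂⁺_n(r) is the coefficient of z^{−r} in the Laurent polynomial (z − z^{−1})^{2−n}, and for n ≥ 3, F̂⁺_n(r) is the coefficient of z^{−r} in (∑_{i≥0} z^{−(2i+1)})^{n−2}. -/

import Mathlib

/-- A family of functions `F : ℕ → ℤ → ℚ` is admissible if
(A1) `F 2 0 = 1` and `F 2 r = 0` for `r ≠ 0`, and
(A2) for all `n ≥ 1` and `r ∈ ℤ`, `F n (r+1) - F n (r-1) = F (n-1) r`. -/
def Admissible (F : ℕ → ℤ → ℚ) : Prop :=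
  (F 2 0 = 1 ∧ ∀ r : ℤ, r ≠ 0 → F 2 r = 0) ∧
  (∀ n : ℕ, 1 ≤ n → ∀ r : ℤ, F n (r + 1) - F n (r - 1) = F (n - 1) r)

/-- The coefficient of `z^{-r}` in the Laurent polynomial `(z - z⁻¹)^(2-n)` (for `n ≤ 2`). -/
noncomputable def lowCoeff (n : ℕ) (r : ℤ) : ℚ :=
  ((LaurentPolynomial.T 1 - LaurentPolynomial.T (-1) : LaurentPolynomial ℚ) ^ (2 - n)).coeff (-r)

/-- The power series `∑_{i ≥ 0} w^(2i+1)`, i.e. the expansion of `(w⁻¹ - w)⁻¹·(-1)`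
used in the expansions of `(z - z⁻¹)⁻¹` for `|z| > 1` (with `w = z⁻¹`) and `|z| < 1`
(with `w = z`, up to sign). -/
noncomputable def Sser : PowerSeries ℚ := PowerSeries.mk fun i => if Odd i then 1 else 0

/-- `F̂⁺_n(r)`: for `n ≤ 2`, the coefficient of `z^{-r}` in `(z - z⁻¹)^(2-n)`;
for `n ≥ 3`, the coefficient of `z^{-r}` in `(∑_{i ≥ 0} z^{-(2i+1)})^(n-2)`,
which equals the coefficient of `w^r` in `Sser^(n-2)` (and `0` for `r < 0`). -/
noncomputable def Fhatplus (n : ℕ) (r : ℤ) : ℚ :=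
  if n ≤ 2 then lowCoeff n r
  else if 0 ≤ r then PowerSeries.coeff r.toNat (Sser ^ (n - 2)) else 0

/-- `F̂⁻_n(r)`: for `n ≤ 2`, the coefficient of `z^{-r}` in `(z - z⁻¹)^(2-n)`;
for `n ≥ 3`, the coefficient of `z^{-r}` in `(-∑_{i ≥ 0} z^(2i+1))^(n-2)`,
which equals the coefficient of `z^{-r}` in `(-Sser)^(n-2)` (and `0` for `r > 0`). -/
noncomputable def Fhatminus (n : ℕ) (r : ℤ) : ℚ :=
  if n ≤ 2 then lowCoeff n r
  else if r ≤ 0 then PowerSeries.coeff (-r).toNat ((-Sser) ^ (n - 2)) else 0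

/-- `F̂_n(r)`: the average of `F̂⁺_n(r)` and `F̂⁻_n(r)`
(for `n ≤ 2` both are the coefficient of `z^{-r}` in `(z - z⁻¹)^(2-n)`). -/
noncomputable def Fhat (n : ℕ) (r : ℤ) : ℚ := (Fhatplus n r + Fhatminus n r) / 2

lemma Sser_key : (1 - PowerSeries.X ^ 2) * Sser = PowerSeries.X := by
  ext n
  rw [sub_mul, one_mul, map_sub]
  rcases n with _ | _ | m
  · simp [Sser, PowerSeries.coeff_X_pow_mul']
  · simp [Sser, PowerSeries.coeff_X_pow_mul']
  · rw [show m + 1 + 1 = m + 2 by ring, PowerSeries.coeff_X_pow_mul Sser 2 m]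
    simp [Sser, PowerSeries.coeff_X, Nat.odd_add]

lemma coeff_step (k m : ℕ) :
    PowerSeries.coeff (m + 2) (Sser ^ (k + 1)) - PowerSeries.coeff m (Sser ^ (k + 1))
      = PowerSeries.coeff (m + 1) (Sser ^ k) := by
  have h : Sser ^ (k + 1) - PowerSeries.X ^ 2 * Sser ^ (k + 1) = PowerSeries.X * Sser ^ k := by
    calc Sser ^ (k + 1) - PowerSeries.X ^ 2 * Sser ^ (k + 1)
        = ((1 - PowerSeries.X ^ 2) * Sser) * Sser ^ k := by ring
      _ = PowerSeries.X * Sser ^ k := by rw [Sser_key]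
  have h2 := congrArg (PowerSeries.coeff (m + 2)) h
  rw [map_sub, PowerSeries.coeff_X_pow_mul (Sser ^ (k+1)) 2 m] at h2
  rw [h2, PowerSeries.coeff_succ_X_mul]

lemma coeff_lt (k m : ℕ) (h : m < k) : PowerSeries.coeff m (Sser ^ k) = 0 := by
  obtain ⟨g, hg⟩ : (PowerSeries.X : PowerSeries ℚ) ∣ Sser := by
    rw [PowerSeries.X_dvd_iff]; simp [Sser, PowerSeries.constantCoeff_mk]
  rw [hg, mul_pow, PowerSeries.coeff_X_pow_mul']
  simp [Nat.not_le.mpr h]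

lemma T_apply (n m : ℤ) : (LaurentPolynomial.T n : LaurentPolynomial ℚ).coeff m = if n = m then 1 else 0 := by
  exact LaurentPolynomial.T_apply m n

open LaurentPolynomial in
lemma low2 (r : ℤ) : (((T 1 - T (-1) : LaurentPolynomial ℚ) ^ (2-2)).coeff (-r)) = if r = 0 then 1 else 0 := by
  simp only [Nat.sub_self, pow_zero, AddMonoidAlgebra.one_def, AddMonoidAlgebra.coeff_single, Finsupp.single_apply]
  split_ifs <;> first | omega | norm_num

open LaurentPolynomial in
lemma low1 (r : ℤ) : (((T 1 - T (-1) : LaurentPolynomial ℚ) ^ (2-1)).coeff (-r))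
    = (if r = -1 then 1 else 0) - (if r = 1 then 1 else 0) := by
  rw [pow_one]
  show (Finsupp.single 1 1 - Finsupp.single (-1) 1 : ℤ →₀ ℚ) (-r) = _
  simp only [Finsupp.sub_apply, Finsupp.single_apply]
  split_ifs <;> first | omega | norm_num

open LaurentPolynomial in
lemma low0 (r : ℤ) : (((T 1 - T (-1) : LaurentPolynomial ℚ) ^ (2-0)).coeff (-r))
    = (if r = -2 then 1 else 0) - (if r = 0 then 1 else 0) - (if r = 0 then 1 else 0)
      + (if r = 2 then 1 else 0) := by
  have h : (T 1 - T (-1) : LaurentPolynomial ℚ) ^ (2-0) = T 2 - T 0 - T 0 + T (-2) := by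
    have e1 : (T 2 : LaurentPolynomial ℚ) = T 1 * T 1 := by rw [← T_add]; norm_num
    have e2 : (T (-2) : LaurentPolynomial ℚ) = T (-1) * T (-1) := by rw [← T_add]; norm_num
    have e3 : (T 0 : LaurentPolynomial ℚ) = T 1 * T (-1) := by rw [← T_add]; norm_num
    rw [e1, e2, e3]; ring
  have e : ((T 2 - T 0 - T 0 + T (-2) : LaurentPolynomial ℚ)).coeff (-r)
      = (((Finsupp.single 2 1 : ℤ →₀ ℚ) - Finsupp.single 0 1 - Finsupp.single 0 1
        + Finsupp.single (-2) 1 : ℤ →₀ ℚ) : ℤ →₀ ℚ) (-r) := rfl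
  rw [h, e]
  simp only [Finsupp.sub_apply, Finsupp.add_apply, Finsupp.single_apply]
  split_ifs <;> first | omega | norm_num

lemma main_step (k : ℕ) (r : ℤ) :
    (if 0 ≤ r + 1 then PowerSeries.coeff (r+1).toNat (Sser ^ (k+1)) else 0)
      - (if 0 ≤ r - 1 then PowerSeries.coeff (r-1).toNat (Sser ^ (k+1)) else 0)
      = (if 0 ≤ r then PowerSeries.coeff r.toNat (Sser ^ k) else 0) := by
  rcases lt_trichotomy r 0 with hr | hr | hr
  · rcases eq_or_lt_of_le (by omega : r ≤ -1) with hr1 | hr1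
    · rw [if_pos (by omega), if_neg (by omega), if_neg (by omega)]
      rw [show (r+1).toNat = 0 by omega, coeff_lt (k+1) 0 (by omega)]
      ring
    · rw [if_neg (by omega), if_neg (by omega), if_neg (by omega)]; ring
  · subst hr
    rw [if_pos (by omega), if_neg (by omega), if_pos le_rfl]
    rcases k with _ | j
    · norm_num [Sser]
    · rw [show ((0:ℤ)+1).toNat = 1 by rfl, show (0:ℤ).toNat = 0 by rfl,
        coeff_lt (j+1+1) 1 (by omega), coeff_lt (j+1) 0 (by omega)]
      ring
  · rw [if_pos (by omega), if_pos (by omega), if_pos (by omega),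
      show (r+1).toNat = (r-1).toNat + 2 by omega, show r.toNat = (r-1).toNat + 1 by omega]
    exact coeff_step k (r-1).toNat

lemma lowCoeff2 (r : ℤ) : lowCoeff 2 r = if r = 0 then 1 else 0 := low2 r
lemma lowCoeff1 (r : ℤ) : lowCoeff 1 r
    = (if r = -1 then 1 else 0) - (if r = 1 then 1 else 0) := low1 r
lemma lowCoeff0 (r : ℤ) : lowCoeff 0 r
    = (if r = -2 then 1 else 0) - (if r = 0 then 1 else 0) - (if r = 0 then 1 else 0)
      + (if r = 2 then 1 else 0) := low0 r

lemma Fhatplus_low (n : ℕ) (hn : n ≤ 2) (r : ℤ) : Fhatplus n r = lowCoeff n r := if_pos hn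

lemma Fhatplus_high (n : ℕ) (hn : ¬ n ≤ 2) (r : ℤ) :
    Fhatplus n r = if 0 ≤ r then PowerSeries.coeff r.toNat (Sser ^ (n - 2)) else 0 :=
  if_neg hn

lemma low2_eq_ser (r : ℤ) :
    lowCoeff 2 r = if 0 ≤ r then PowerSeries.coeff r.toNat (Sser ^ 0) else 0 := by
  rw [lowCoeff2, pow_zero]
  simp only [PowerSeries.coeff_one]
  split_ifs <;> first | omega | norm_num

/-- The family `F̂⁺` is admissible. -/
theorem Fhatplus_admissible : Admissible Fhatplus := by
  refine ⟨⟨?_, ?_⟩, ?_⟩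
  · rw [Fhatplus_low 2 (by norm_num), lowCoeff2]; norm_num
  · intro r hr
    rw [Fhatplus_low 2 (by norm_num), lowCoeff2, if_neg hr]
  · intro n hn r
    match n, hn with
    | 1, _ =>
      rw [show (1:ℕ) - 1 = 0 from rfl, Fhatplus_low 1 (by norm_num),
        Fhatplus_low 1 (by norm_num), Fhatplus_low 0 (by norm_num),
        lowCoeff1, lowCoeff1, lowCoeff0]
      split_ifs <;> first | omega | norm_num
    | 2, _ =>
      rw [show (2:ℕ) - 1 = 1 from rfl, Fhatplus_low 2 (by norm_num),
        Fhatplus_low 2 (by norm_num), Fhatplus_low 1 (by norm_num),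
        lowCoeff2, lowCoeff2, lowCoeff1]
      split_ifs <;> first | omega | norm_num
    | 3, _ =>
      rw [show (3:ℕ) - 1 = 2 from rfl, Fhatplus_high 3 (by norm_num),
        Fhatplus_high 3 (by norm_num), Fhatplus_low 2 (by norm_num), low2_eq_ser,
        show (3:ℕ) - 2 = 0 + 1 from rfl]
      exact main_step 0 r
    | (m+4), _ =>
      rw [show m + 4 - 1 = m + 3 from rfl, Fhatplus_high (m+4) (by omega),
        Fhatplus_high (m+4) (by omega), Fhatplus_high (m+3) (by omega),
        show m + 4 - 2 = (m+1) + 1 from rfl, show m + 3 - 2 = m + 1 from rfl]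
      exact main_step (m+1) r
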